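/- Let 0 < a < b and let U : (a,b) → ℝ be twice differentiable with U''(r)/2 + U'(r)/r ≥ 0 for all r ∈ (a,b). Then U has no strict local maximum in (a,b); that is, there exist no c ∈ (a,b) and δ > 0 with (c−δ, c+δ) ⊆ (a,b) such that U(r) < U(c) for all r ∈ (c−δ, c+δ) with r ≠ c. -/

import Mathlib

/-- If `0 < a < b` and `U` is twice differentiable on `(a, b)` with
`U'' r / 2 + U' r / r ≥ 0` for all `r ∈ (a, b)`, then `U` has no strict local
maximum in `(a, b)`. -/
theorem sec_no_strict_local_max
    (a b : ℝ) (ha : 0 < a) (hab : a < b)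
    (U U' U'' : ℝ → ℝ)
    (hU' : ∀ r ∈ Set.Ioo a b, HasDerivAt U (U' r) r)
    (hU'' : ∀ r ∈ Set.Ioo a b, HasDerivAt U' (U'' r) r)
    (hsec : ∀ r ∈ Set.Ioo a b, 0 ≤ U'' r / 2 + U' r / r) :
    ¬ ∃ c ∈ Set.Ioo a b, ∃ δ > (0 : ℝ),
        Set.Ioo (c - δ) (c + δ) ⊆ Set.Ioo a b ∧
        ∀ r ∈ Set.Ioo (c - δ) (c + δ), r ≠ c → U r < U c := by
  rintro ⟨c, hc, δ, hδ, hsub, hmax⟩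
  set F : ℝ → ℝ := fun r => r ^ 2 * U' r with hF
  have hxpos : ∀ x ∈ Set.Ioo a b, (0:ℝ) < x := fun x hx => ha.trans hx.1
  have hFderiv : ∀ x ∈ Set.Ioo a b,
      HasDerivAt F (2 * x * U' x + x ^ 2 * U'' x) x := by
    intro x hx
    have h1 : HasDerivAt (fun r : ℝ => r ^ 2) (2 * x) x := by
      simpa using (hasDerivAt_pow 2 x)
    exact h1.mul (hU'' x hx)
  have hFnonneg : ∀ x ∈ Set.Ioo a b, 0 ≤ 2 * x * U' x + x ^ 2 * U'' x := by
    intro x hx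
    have hx0 := hxpos x hx
    have h := hsec x hx
    have h2 : 0 ≤ 2 * x ^ 2 * (U'' x / 2 + U' x / x) :=
      mul_nonneg (by positivity) h
    have key : 2 * x ^ 2 * (U'' x / 2 + U' x / x)
        = 2 * x * U' x + x ^ 2 * U'' x := by
      field_simp
      ring
    linarith [key ▸ h2]
  have hFmono : MonotoneOn F (Set.Ioo a b) := by
    apply monotoneOn_of_deriv_nonneg (convex_Ioo a b)
    · exact fun x hx => (hFderiv x hx).continuousAt.continuousWithinAt
    · intro x hx
      rw [interior_Ioo] at hx
      exact (hFderiv x hx).differentiableAt.differentiableWithinAt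
    · intro x hx
      rw [interior_Ioo] at hx
      rw [(hFderiv x hx).deriv]
      exact hFnonneg x hx
  -- U' c = 0
  have hcmem : c ∈ Set.Ioo (c - δ) (c + δ) := by constructor <;> linarith
  have hlocmax : IsLocalMax U c := by
    have hnhds : Set.Ioo (c - δ) (c + δ) ∈ nhds c := isOpen_Ioo.mem_nhds hcmem
    filter_upwards [hnhds] with r hr
    by_cases hrc : r = c
    · simp [hrc]
    · exact (hmax r hr hrc).le
  have hU'c : U' c = 0 := hlocmax.hasDerivAt_eq_zero (hU' c hc)
  -- pick r0 to the right of c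
  set r0 : ℝ := c + δ / 2 with hr0def
  have hr0mem : r0 ∈ Set.Ioo (c - δ) (c + δ) := by constructor <;> simp [hr0def] <;> linarith
  have hr0ab : r0 ∈ Set.Ioo a b := hsub hr0mem
  have hIcc : Set.Icc c r0 ⊆ Set.Ioo a b := by
    intro x hx
    exact hsub ⟨by linarith [hx.1], by have := hx.2; simp only [hr0def] at this; linarith⟩
  have hU'nonneg : ∀ x ∈ Set.Ioo c r0, 0 ≤ U' x := by
    intro x hx
    have hxab : x ∈ Set.Ioo a b := hIcc ⟨hx.1.le, hx.2.le⟩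
    have hcx : F c ≤ F x := hFmono hc hxab hx.1.le
    have hFc : F c = 0 := by simp [hF, hU'c]
    rw [hFc] at hcx
    simp only [hF] at hcx
    have hx0 : (0:ℝ) < x := hxpos x hxab
    nlinarith [pow_pos hx0 2]
  have hUmono : MonotoneOn U (Set.Icc c r0) := by
    apply monotoneOn_of_deriv_nonneg (convex_Icc c r0)
    · exact fun x hx => (hU' x (hIcc hx)).continuousAt.continuousWithinAt
    · intro x hx
      rw [interior_Icc] at hx
      exact (hU' x (hIcc ⟨hx.1.le, hx.2.le⟩)).differentiableAt.differentiableWithinAt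
    · intro x hx
      rw [interior_Icc] at hx
      rw [(hU' x (hIcc ⟨hx.1.le, hx.2.le⟩)).deriv]
      exact hU'nonneg x hx
  have hcr0 : c < r0 := by simp [hr0def]; linarith
  have h1 : U c ≤ U r0 := hUmono ⟨le_refl c, hcr0.le⟩ ⟨hcr0.le, le_refl r0⟩ hcr0.le
  have h2 : U r0 < U c := hmax r0 hr0mem (by simp [hr0def]; linarith)
  linarith
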